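/- arXiv:1905.11762 — 7 statements merged into one kernel-verified Lean document; each statement's English description precedes it below -/
import Mathlib

section
/- For every replicated data type F and every history H, if H satisfies basic eventual consistency BEC(F), then H satisfies fluctuating eventual consistency FEC(F); that is, FEC(F) is at most as strong a consistency guarantee as BEC(F). -/
set_option autoImplicit false

/-- Consistency levels. -/
inductive Lvl : Type
  | weak
  | strong
  deriving DecidableEq

/-- A history `H = (E, op, rval, rb, ss, lvl)`.  The value `none` of `rval`
plays the role of the distinguished symbol `∇` (a pending operation). -/
structure History (E Op Val : Type) : Type where
  op : E → Op
  rval : E → Option Val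
  rb : E → E → Prop
  ss : E → E → Prop
  lvl : E → Lvl
  countable : Countable E
  rb_irrefl : ∀ a, ¬ rb a a
  rb_trans : ∀ a b c, rb a b → rb b c → rb a c
  rb_finite_preds : ∀ e, {e' | rb e' e}.Finite
  rb_ret : ∀ a b, rb a b → rval a ≠ none
  rb_interval : ∀ a b c d, rb a b → rb c d → rb a d ∨ rb c b
  ss_equiv : Equivalence ss
  ss_rb_total : ∀ a b, ss a b → a ≠ b → rb a b ∨ rb b a

/-- An abstract execution `A = (H, vis, ar, par)`. -/
structure AExec (E Op Val : Type) extends History E Op Val : Type where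
  vis : E → E → Prop
  ar : E → E → Prop
  par : E → E → E → Prop
  vis_acyclic : ∀ e, ¬ Relation.TransGen vis e e
  vis_finite_preds : ∀ e, {e' | vis e' e}.Finite
  ar_irrefl : ∀ a, ¬ ar a a
  ar_trans : ∀ a b c, ar a b → ar b c → ar a c
  ar_total : ∀ a b, a ≠ b → ar a b ∨ ar b a
  par_irrefl : ∀ e a, ¬ par e a a
  par_trans : ∀ e a b c, par e a b → par e b c → par e a c
  par_total : ∀ e a b, a ≠ b → par e a b ∨ par e b a

/-- An operation context `C = (E_C, op, vis, ar)`: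
a finite set of events with operations, visibility, and a strict total
arbitration order. -/
structure OpContext (Op : Type) : Type 1 where
  carrier : Type
  finite : Finite carrier
  op : carrier → Op
  vis : carrier → carrier → Prop
  ar : carrier → carrier → Prop
  ar_irrefl : ∀ a, ¬ ar a a
  ar_trans : ∀ a b c, ar a b → ar b c → ar a c
  ar_total : ∀ a b, a ≠ b → ar a b ∨ ar b a

namespace OpContext

variable {Op : Type}

/-- Isomorphism of operation contexts. -/
structure Iso (C C' : OpContext Op) where
  toEquiv : C.carrier ≃ C'.carrier
  map_op : ∀ x, C'.op (toEquiv x) = C.op x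
  map_vis : ∀ x y, C.vis x y ↔ C'.vis (toEquiv x) (toEquiv y)
  map_ar : ∀ x y, C.ar x y ↔ C'.ar (toEquiv x) (toEquiv y)

/-- The restriction of a context to a subset of its events. -/
def restrict (C : OpContext Op) (S : Set C.carrier) : OpContext Op where
  carrier := {x : C.carrier // x ∈ S}
  finite := by haveI := C.finite; exact Subtype.finite
  op := fun x => C.op x.1
  vis := fun x y => C.vis x.1 y.1
  ar := fun x y => C.ar x.1 y.1
  ar_irrefl := fun a => C.ar_irrefl a.1
  ar_trans := fun a b c hab hbc => C.ar_trans a.1 b.1 c.1 hab hbc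
  ar_total := fun a b h => C.ar_total a.1 b.1 (fun hh => h (Subtype.ext hh))

/-- The events of a context, listed in ascending arbitration order. -/
noncomputable def sortedEvents (C : OpContext Op) : List C.carrier := by
  haveI := C.finite
  letI : Fintype C.carrier := Fintype.ofFinite _
  letI le : C.carrier → C.carrier → Prop := fun a b => a = b ∨ C.ar a b
  haveI : DecidableRel le := Classical.decRel _
  haveI : IsTrans C.carrier le := ⟨by
    rintro a b c (rfl | hab) (rfl | hbc)
    · exact Or.inl rfl
    · exact Or.inr hbc
    · exact Or.inr hab
    · exact Or.inr (C.ar_trans _ _ _ hab hbc)⟩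
  haveI : IsAntisymm C.carrier le := ⟨by
    rintro a b (rfl | hab) (h | hba)
    · rfl
    · rfl
    · exact h.symm
    · exact absurd (C.ar_trans _ _ _ hab hba) (C.ar_irrefl a)⟩
  haveI : IsTotal C.carrier le := ⟨by
    intro a b
    by_cases h : a = b
    · exact Or.inl (Or.inl h)
    · rcases C.ar_total a b h with h' | h'
      · exact Or.inl (Or.inr h')
      · exact Or.inr (Or.inr h')⟩
  exact Finset.univ.sort le

end OpContext

/-- `rank B rel x` is the number of `y ∈ B` with `rel y x`. -/
noncomputable def rank {E : Type} (B : Set E) (r : E → E → Prop) (x : E) : ℕ :=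
  {y ∈ B | r y x}.ncard

namespace AExec

variable {E Op Val : Type}

/-- Session order `so := rb ∩ ss`. -/
def so (A : AExec E Op Val) (a b : E) : Prop := A.rb a b ∧ A.ss a b

/-- Happens-before `hb := (so ∪ vis)⁺`. -/
def hb (A : AExec E Op Val) : E → E → Prop :=
  Relation.TransGen (fun a b => A.so a b ∨ A.vis a b)

/-- The set `vis⁻¹(e)` of visibility predecessors of `e`. -/
def visPreds (A : AExec E Op Val) (e : E) : Set E := {x | A.vis x e}

/-- The operation context of an event: its visibility predecessors together
with the final arbitration order. -/
def context (A : AExec E Op Val) (e : E) : OpContext Op where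
  carrier := {x : E // A.vis x e}
  finite := (A.vis_finite_preds e).to_subtype
  op := fun x => A.op x.1
  vis := fun x y => A.vis x.1 y.1
  ar := fun x y => A.ar x.1 y.1
  ar_irrefl := fun a => A.ar_irrefl a.1
  ar_trans := fun a b c h1 h2 => A.ar_trans a.1 b.1 c.1 h1 h2
  ar_total := fun a b h => A.ar_total a.1 b.1 (fun hh => h (Subtype.ext hh))

/-- The fluctuating operation context of an event: its visibility predecessors
together with the arbitration order `par e` as perceived by `e`. -/
def fcontext (A : AExec E Op Val) (e : E) : OpContext Op where
  carrier := {x : E // A.vis x e}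
  finite := (A.vis_finite_preds e).to_subtype
  op := fun x => A.op x.1
  vis := fun x y => A.vis x.1 y.1
  ar := fun x y => A.par e x.1 y.1
  ar_irrefl := fun a => A.par_irrefl e a.1
  ar_trans := fun a b c h1 h2 => A.par_trans e a.1 b.1 c.1 h1 h2
  ar_total := fun a b h => A.par_total e a.1 b.1 (fun hh => h (Subtype.ext hh))

/-- Eventual visibility. -/
def EV (A : AExec E Op Val) : Prop :=
  ∀ e, {e' | A.rb e e' ∧ ¬ A.vis e e'}.Finite

/-- No circular causality: `hb` is acyclic. -/
def NCC (A : AExec E Op Val) : Prop := ∀ e, ¬ A.hb e e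

/-- Return value consistency. -/
def RVal (F : Op → OpContext Op → Val) (A : AExec E Op Val) : Prop :=
  ∀ e, A.rval e = some (F (A.op e) (A.context e))

/-- Fluctuating return value consistency. -/
def FRVal (F : Op → OpContext Op → Val) (A : AExec E Op Val) : Prop :=
  ∀ e, A.rval e = some (F (A.op e) (A.fcontext e))

/-- Convergent perceived arbitration. -/
def CPar (A : AExec E Op Val) : Prop :=
  ∀ e, {e' | A.vis e e' ∧
    rank (A.visPreds e') (A.par e') e ≠ rank (A.visPreds e') A.ar e}.Finite

/-- Basic eventual consistency. -/
def BEC (F : Op → OpContext Op → Val) (A : AExec E Op Val) : Prop :=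
  A.EV ∧ A.NCC ∧ A.RVal F

/-- Fluctuating eventual consistency. -/
def FEC (F : Op → OpContext Op → Val) (A : AExec E Op Val) : Prop :=
  A.EV ∧ A.NCC ∧ A.FRVal F ∧ A.CPar

/-- Single order (unparametrized): `vis = ar \ (E' × E)` for some set `E'`
of pending events. -/
def SinOrd (A : AExec E Op Val) : Prop :=
  ∃ E' : Set E, (∀ x ∈ E', A.rval x = none) ∧
    ∀ x y, A.vis x y ↔ (A.ar x y ∧ x ∉ E')

/-- Parametrized eventual visibility. -/
def EVL (A : AExec E Op Val) (l : Lvl) : Prop :=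
  ∀ e, {e' | A.lvl e' = l ∧ A.rb e e' ∧ ¬ A.vis e e'}.Finite

/-- Parametrized no circular causality: `hb ∩ (L × L)` is acyclic. -/
def NCCL (A : AExec E Op Val) (l : Lvl) : Prop :=
  ∀ e, ¬ Relation.TransGen (fun a b => A.hb a b ∧ A.lvl a = l ∧ A.lvl b = l) e e

/-- Parametrized return value consistency. -/
def RValL (F : Op → OpContext Op → Val) (A : AExec E Op Val) (l : Lvl) : Prop :=
  ∀ e, A.lvl e = l → A.rval e = some (F (A.op e) (A.context e))

/-- Parametrized fluctuating return value consistency. -/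
def FRValL (F : Op → OpContext Op → Val) (A : AExec E Op Val) (l : Lvl) : Prop :=
  ∀ e, A.lvl e = l → A.rval e = some (F (A.op e) (A.fcontext e))

/-- Parametrized convergent perceived arbitration. -/
def CParL (A : AExec E Op Val) (l : Lvl) : Prop :=
  ∀ e, {e' | A.lvl e' = l ∧ A.vis e e' ∧
    rank (A.visPreds e') (A.par e') e ≠ rank (A.visPreds e') A.ar e}.Finite

/-- Parametrized basic eventual consistency `BEC(l, F)`. -/
def BECL (F : Op → OpContext Op → Val) (A : AExec E Op Val) (l : Lvl) : Prop :=
  A.EVL l ∧ A.NCCL l ∧ A.RValL F l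

/-- Parametrized fluctuating eventual consistency `FEC(l, F)`. -/
def FECL (F : Op → OpContext Op → Val) (A : AExec E Op Val) (l : Lvl) : Prop :=
  A.EVL l ∧ A.NCCL l ∧ A.FRValL F l ∧ A.CParL l

/-- Parametrized single order `SinOrd(l)`:
`vis ∩ (E × L) = (ar ∩ (E × L)) \ (E' × E)` for some set `E'` of pending
events. -/
def SinOrdL (A : AExec E Op Val) (l : Lvl) : Prop :=
  ∃ E' : Set E, (∀ x ∈ E', A.rval x = none) ∧
    ∀ x y, A.lvl y = l → (A.vis x y ↔ (A.ar x y ∧ x ∉ E'))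

/-- Parametrized session arbitration `SessArb(l)`: `so ∩ (E × L) ⊆ ar`. -/
def SessArbL (A : AExec E Op Val) (l : Lvl) : Prop :=
  ∀ x y, A.so x y → A.lvl y = l → A.ar x y

/-- Parametrized real-time order `RT(l)`: `rb ∩ (L × L) ⊆ ar`. -/
def RTL (A : AExec E Op Val) (l : Lvl) : Prop :=
  ∀ x y, A.lvl x = l → A.lvl y = l → A.rb x y → A.ar x y

/-- Parametrized sequential consistency `Seq(l, F)`. -/
def SeqL (F : Op → OpContext Op → Val) (A : AExec E Op Val) (l : Lvl) : Prop :=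
  A.SinOrdL l ∧ A.SessArbL l ∧ A.BECL F l

/-- Parametrized linearizability `Lin(l, F)`. -/
def LinL (F : Op → OpContext Op → Val) (A : AExec E Op Val) (l : Lvl) : Prop :=
  A.SinOrdL l ∧ A.RTL l ∧ A.BECL F l

end AExec

/-- A history satisfies a consistency guarantee `P` iff it can be extended by
`vis`, `ar`, `par` to an abstract execution satisfying `P`. -/
def History.sat {E Op Val : Type} (H : History E Op Val)
    (P : AExec E Op Val → Prop) : Prop :=
  ∃ A : AExec E Op Val, A.toHistory = H ∧ P A

/-- A replicated data type: a return value for every operation and every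
operation context, invariant under isomorphism of contexts. -/
structure RDT (Op Val : Type) : Type 1 where
  F : Op → OpContext Op → Val
  iso_inv : ∀ (o : Op) (C C' : OpContext Op), Nonempty (C.Iso C') → F o C = F o C'

/-- An operation is read-only for `F` iff removing any event performing it
from any context does not change the value of any operation. -/
def isReadOnly {Op Val : Type} (F : Op → OpContext Op → Val) (o : Op) : Prop :=
  ∀ (o' : Op) (C : OpContext Op) (e : C.carrier), C.op e = o →
    F o' C = F o' (C.restrict {x | x ≠ e})

/-! ### The append-only sequence data type `F_seq` -/

/-- The 26-letter alphabet `{a, …, z}`. -/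
abbrev Letter : Type := Fin 26

/-- Words over the alphabet. -/
abbrev Word : Type := List Letter

/-- Operations of the append-only sequence data type. -/
inductive SeqOp : Type
  | append (s : Word)
  | read

/-- Return values of the append-only sequence data type. -/
inductive SeqVal : Type
  | ok
  | word (w : Word)

/-- The word returned by `read`: the concatenation, in ascending arbitration
order, of the words appended by the append events of the context. -/
noncomputable def seqReadWord (C : OpContext SeqOp) : Word :=
  (C.sortedEvents.map C.op).foldr
    (fun o w => match o with
      | SeqOp.append s => s ++ w
      | SeqOp.read => w) []

/-- The append-only sequence replicated data type `F_seq`. -/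
noncomputable def Fseq : SeqOp → OpContext SeqOp → SeqVal
  | SeqOp.append _, _ => SeqVal.ok
  | SeqOp.read, C => SeqVal.word (seqReadWord C)

/-! ### The non-negative counter data type `F_NNC` -/

/-- Operations of the non-negative counter. -/
inductive NNCOp : Type
  | add (v : ℕ)
  | subtract (v : ℕ)
  | get

/-- Return values of the non-negative counter. -/
inductive NNCVal : Type
  | ok
  | bool (b : Bool)
  | int (n : ℤ)

/-- One step of the fold computing the counter value. -/
def fNNC (x : ℤ) : NNCOp → ℤ
  | NNCOp.add v => x + v
  | NNCOp.subtract v => if (v : ℤ) ≤ x then x - v else x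
  | NNCOp.get => x

/-- The value of the counter in a context: fold `fNNC` starting from `0`
over the operations of the context taken in ascending arbitration order. -/
noncomputable def nncVal (C : OpContext NNCOp) : ℤ :=
  (C.sortedEvents.map C.op).foldl fNNC 0

/-- The non-negative counter replicated data type `F_NNC`. -/
noncomputable def Fnnc : NNCOp → OpContext NNCOp → NNCVal
  | NNCOp.add _, _ => NNCVal.ok
  | NNCOp.subtract v, C => NNCVal.bool (decide ((v : ℤ) ≤ nncVal C))
  | NNCOp.get, C => NNCVal.int (nncVal C)

/-- For every replicated data type `F` and every history `H`,
if `H` satisfies `BEC(F)` then `H` satisfies `FEC(F)`: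
`FEC(F)` is at most as strong as `BEC(F)`. -/
theorem fec_le_bec {E Op Val : Type} (F : RDT Op Val) (H : History E Op Val)
    (h : H.sat (AExec.BEC F.F)) : H.sat (AExec.FEC F.F) := by
  obtain ⟨A, hA, hEV, hNCC, hRVal⟩ := h
  refine ⟨{ A with
      par := fun _ => A.ar
      par_irrefl := fun _ => A.ar_irrefl
      par_trans := fun _ => A.ar_trans
      par_total := fun _ => A.ar_total }, hA, hEV, hNCC, ?_, ?_⟩
  · intro e
    exact hRVal e
  · intro e
    convert Set.finite_empty
    ext e'
    simp only [Set.mem_setOf_eq, Set.mem_empty_iff_false, iff_false]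
    rintro ⟨-, hne⟩
    exact hne rfl
end

section
/- There exists a history H over the operations of the append-only sequence data type F_seq that satisfies FEC(F_seq) but does not satisfy BEC(F_seq); hence FEC(F_seq) is strictly weaker than BEC(F_seq). -/
set_option autoImplicit false

/-! ### Auxiliary machinery for the proof of the main theorem. -/

namespace OpContext
variable {Op : Type}

lemma le_isTrans (C : OpContext Op) : IsTrans C.carrier (fun a b => a = b ∨ C.ar a b) := ⟨by
  rintro a b c (rfl | hab) (rfl | hbc)
  · exact Or.inl rfl
  · exact Or.inr hbc
  · exact Or.inr hab
  · exact Or.inr (C.ar_trans _ _ _ hab hbc)⟩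

lemma le_isAntisymm (C : OpContext Op) : IsAntisymm C.carrier (fun a b => a = b ∨ C.ar a b) := ⟨by
  rintro a b (rfl | hab) (h | hba)
  · rfl
  · rfl
  · exact h.symm
  · exact absurd (C.ar_trans _ _ _ hab hba) (C.ar_irrefl a)⟩

lemma le_isTotal (C : OpContext Op) : IsTotal C.carrier (fun a b => a = b ∨ C.ar a b) := ⟨by
  intro a b
  by_cases h : a = b
  · exact Or.inl (Or.inl h)
  · rcases C.ar_total a b h with h' | h'
    · exact Or.inl (Or.inr h')
    · exact Or.inr (Or.inr h')⟩

lemma sortedEvents_mem (C : OpContext Op) (x : C.carrier) : x ∈ C.sortedEvents := by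
  haveI := C.finite
  haveI := C.le_isTrans; haveI := C.le_isAntisymm; haveI := C.le_isTotal
  letI : Fintype C.carrier := Fintype.ofFinite _
  letI : DecidableRel (fun a b => a = b ∨ C.ar a b) := Classical.decRel _
  unfold sortedEvents
  exact Finset.mem_sort _ |>.mpr (Finset.mem_univ x)

lemma sortedEvents_nodup (C : OpContext Op) : C.sortedEvents.Nodup := by
  haveI := C.le_isTrans; haveI := C.le_isAntisymm; haveI := C.le_isTotal
  letI : DecidableRel (fun a b => a = b ∨ C.ar a b) := Classical.decRel _
  unfold sortedEvents
  exact Finset.sort_nodup _ _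

lemma sortedEvents_sorted (C : OpContext Op) :
    C.sortedEvents.Pairwise (fun a b => a = b ∨ C.ar a b) := by
  haveI := C.le_isTrans; haveI := C.le_isAntisymm; haveI := C.le_isTotal
  letI : DecidableRel (fun a b => a = b ∨ C.ar a b) := Classical.decRel _
  unfold sortedEvents
  exact Finset.pairwise_sort _ _

/-- A context with exactly two events `u`, `v` with `u` arbitrated before `v`
has sorted event list `[u, v]`. -/
lemma sortedEvents_pair (C : OpContext Op) (u v : C.carrier)
    (huv : u ≠ v) (har : C.ar u v) (hall : ∀ x : C.carrier, x = u ∨ x = v) :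
    C.sortedEvents = [u, v] := by
  have hmem : ∀ x, x ∈ C.sortedEvents := C.sortedEvents_mem
  have hnd := C.sortedEvents_nodup
  have hsort := C.sortedEvents_sorted
  rcases hl : C.sortedEvents with _ | ⟨a, _ | ⟨b, rest⟩⟩
  · exact absurd (hmem u) (by simp [hl])
  · have h1 := hmem u; have h2 := hmem v
    rw [hl] at h1 h2
    simp at h1 h2
    exact absurd (h1.trans h2.symm) huv
  · rw [hl] at hmem hnd hsort
    rcases rest with _ | ⟨c, rest'⟩
    · -- l = [a, b]
      have hab : a ≠ b := by
        intro h; subst h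
        simp [List.nodup_cons] at hnd
      rcases hall a with rfl | rfl
      · rcases hall b with rfl | rfl
        · exact absurd rfl hab
        · rfl
      · rcases hall b with rfl | rfl
        · rcases (List.pairwise_cons.mp hsort).1 b (by simp) with h | h
          · exact absurd h hab
          · exact absurd (C.ar_trans _ _ _ h har) (C.ar_irrefl _)
        · exact absurd rfl hab
    · -- at least three distinct elements a b c, all in {u, v}: contradiction
      exfalso
      have hab : a ≠ b := by rintro rfl; simp [List.nodup_cons] at hnd
      have hac : a ≠ c := by rintro rfl; simp [List.nodup_cons] at hnd
      have hbc : b ≠ c := by rintro rfl; simp [List.nodup_cons] at hnd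
      rcases hall a with rfl | rfl <;> rcases hall b with rfl | rfl <;>
        rcases hall c with rfl | rfl <;> simp_all

end OpContext

/-- The word contributed by a single operation. -/
def opWord : SeqOp → Word
  | SeqOp.append s => s
  | SeqOp.read => []

lemma foldr_eq_join (l : List SeqOp) :
    l.foldr (fun o w => match o with
      | SeqOp.append s => s ++ w
      | SeqOp.read => w) [] = (l.map opWord).flatten := by
  induction l with
  | nil => rfl
  | cons o t ih => cases o <;> simp [opWord, ih]

lemma seqReadWord_eq_join (C : OpContext SeqOp) :
    seqReadWord C = ((C.sortedEvents.map C.op).map opWord).flatten := by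
  rw [seqReadWord, foldr_eq_join]

/-- If a join of short words is a singleton, some word is that singleton. -/
lemma join_eq_singleton {α : Type} (f : α → Word) (hf : ∀ a, (f a).length ≤ 1) :
    ∀ (l : List α) (y : Letter), (l.map f).flatten = [y] → ∃ q ∈ l, f q = [y] := by
  intro l
  induction l with
  | nil => intro y h; simp at h
  | cons a t ih =>
    intro y h
    simp only [List.map_cons, List.flatten_cons] at h
    rcases hfa : f a with _ | ⟨z, rest⟩
    · rw [hfa] at h; simp at h
      obtain ⟨q, hq, hfq⟩ := ih y h
      exact ⟨q, List.mem_cons_of_mem _ hq, hfq⟩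
    · have : rest = [] := by
        have := hf a; rw [hfa] at this; simp at this; exact this
      subst this
      rw [hfa] at h
      simp at h
      exact ⟨a, List.mem_cons_self, by rw [hfa, h.1]⟩

/-- If a join of short words equals a two-letter word, there are two events,
in order, contributing the two letters. -/
lemma join_eq_pair {α : Type} (f : α → Word) (hf : ∀ a, (f a).length ≤ 1) :
    ∀ (l : List α) (x y : Letter), (l.map f).flatten = [x, y] →
      ∃ p q, [p, q].Sublist l ∧ f p = [x] ∧ f q = [y] := by
  intro l
  induction l with
  | nil => intro x y h; simp at h
  | cons a t ih =>
    intro x y h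
    simp only [List.map_cons, List.flatten_cons] at h
    rcases hfa : f a with _ | ⟨z, rest⟩
    · rw [hfa] at h; simp at h
      obtain ⟨p, q, hsub, hp, hq⟩ := ih x y h
      exact ⟨p, q, hsub.cons _, hp, hq⟩
    · have hrest : rest = [] := by
        have := hf a; rw [hfa] at this; simp at this; exact this
      subst hrest
      rw [hfa] at h
      simp at h
      obtain ⟨hz, h2⟩ := h
      obtain ⟨q, hq, hfq⟩ := join_eq_singleton f hf t y h2
      exact ⟨a, q, by
        refine List.Sublist.cons₂ _ ?_
        exact (List.singleton_sublist).mpr hq, by rw [hfa, hz], hfq⟩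

/-! ### The concrete history -/

/-- Letter `a`. -/
def la : Letter := ⟨0, by norm_num⟩
/-- Letter `b`. -/
def lb : Letter := ⟨1, by norm_num⟩

lemma la_ne_lb : la ≠ lb := by decide

/-- Operations: two appends and two reads. -/
def myOp (e : Fin 4) : SeqOp :=
  if e.val = 0 then SeqOp.append [la]
  else if e.val = 1 then SeqOp.append [lb]
  else SeqOp.read

/-- Return values: the two reads return the two appended letters in
opposite orders. -/
def myRval (e : Fin 4) : Option SeqVal :=
  if e.val ≤ 1 then some SeqVal.ok
  else if e.val = 2 then some (SeqVal.word [la, lb])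
  else some (SeqVal.word [lb, la])

/-- Both appends are visible to both reads; nothing else is visible. -/
def myVis (x y : Fin 4) : Prop := x.val ≤ 1 ∧ 2 ≤ y.val

/-- Perceived arbitration: event `3` sees the appends in swapped order. -/
def myPar (e a b : Fin 4) : Prop :=
  if e.val = 3 then Equiv.swap (0 : Fin 4) 1 a < Equiv.swap (0 : Fin 4) 1 b
  else a < b

/-- The history that satisfies `FEC(F_seq)` but not `BEC(F_seq)`. -/
def myHistory : History (Fin 4) SeqOp SeqVal where
  op := myOp
  rval := myRval
  rb := fun _ _ => False
  ss := Eq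
  lvl := fun _ => Lvl.weak
  countable := inferInstance
  rb_irrefl := fun _ h => h
  rb_trans := fun _ _ _ h => h.elim
  rb_finite_preds := fun _ => by simp
  rb_ret := fun _ _ h => h.elim
  rb_interval := fun _ _ _ _ h => h.elim
  ss_equiv := ⟨fun _ => rfl, Eq.symm, Eq.trans⟩
  ss_rb_total := fun a b h hne => absurd h hne

/-- The abstract execution witnessing `FEC(F_seq)`. -/
def myExec : AExec (Fin 4) SeqOp SeqVal where
  toHistory := myHistory
  vis := myVis
  ar := fun a b => a < b
  par := myPar
  vis_acyclic := by
    have key : ∀ a b : Fin 4, Relation.TransGen myVis a b → myVis a b := by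
      intro a b h
      induction h with
      | single h => exact h
      | tail _ hbc ih => exact absurd (le_trans ih.2 hbc.1) (by norm_num)
    intro e h
    exact absurd (le_trans (key e e h).2 (key e e h).1) (by norm_num)
  vis_finite_preds := fun _ => Set.toFinite _
  ar_irrefl := fun a => lt_irrefl a
  ar_trans := fun _ _ _ => lt_trans
  ar_total := fun a b h => lt_or_gt_of_ne h
  par_irrefl := by intro e a; unfold myPar; split <;> exact lt_irrefl _
  par_trans := by intro e a b c; unfold myPar; split <;> exact lt_trans
  par_total := by
    intro e a b h; unfold myPar; split
    · exact lt_or_gt_of_ne (fun hh => h ((Equiv.swap (0:Fin 4) 1).injective hh))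
    · exact lt_or_gt_of_ne h


lemma opWord_la : ∀ z : Fin 4, opWord (myOp z) = [la] → z = 0 := by
  intro z
  fin_cases z <;> simp [myOp, opWord, la, lb]

lemma opWord_lb : ∀ z : Fin 4, opWord (myOp z) = [lb] → z = 1 := by
  intro z
  fin_cases z <;> simp [myOp, opWord, la, lb]

lemma opWord_len : ∀ z : Fin 4, (opWord (myOp z)).length ≤ 1 := by
  intro z
  fin_cases z <;> simp [myOp, opWord]

/-- If in some abstract execution with the operations `myOp` a read returns
the two-letter word `x·y`, then the events appending `x` and `y` are
arbitrated in this order. -/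
lemma read_forces_ar (A : AExec (Fin 4) SeqOp SeqVal) (hop : A.op = myOp)
    (e : Fin 4) (x y : Letter) (i j : Fin 4)
    (hx : ∀ z : Fin 4, opWord (myOp z) = [x] → z = i)
    (hy : ∀ z : Fin 4, opWord (myOp z) = [y] → z = j)
    (hij : i ≠ j)
    (hw : seqReadWord (A.context e) = [x, y]) : A.ar i j := by
  set C := A.context e with hC
  have hops : ∀ p : C.carrier, C.op p = A.op p.1 := fun _ => rfl
  rw [seqReadWord_eq_join, List.map_map] at hw
  have hf : ∀ p : C.carrier, ((opWord ∘ C.op) p).length ≤ 1 := by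
    intro p
    show (opWord (A.op p.1)).length ≤ 1
    rw [hop]; exact opWord_len _
  obtain ⟨p, q, hsub, hp, hq⟩ := join_eq_pair _ hf _ x y hw
  have hpi : p.1 = i := by
    apply hx
    rw [← hop]; exact hp
  have hqj : q.1 = j := by
    apply hy
    rw [← hop]; exact hq
  have hpq : p ≠ q := by
    intro h; rw [h, hqj] at hpi; exact hij hpi.symm
  have hpair : [p, q].Pairwise (fun a b => a = b ∨ C.ar a b) :=
    List.Pairwise.sublist hsub C.sortedEvents_sorted
  rcases (List.pairwise_cons.mp hpair).1 q (by simp) with h | h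
  · exact absurd h hpq
  · have : A.ar p.1 q.1 := h
    rwa [hpi, hqj] at this

theorem fec_aux :
    ∃ (E : Type) (H : History E SeqOp SeqVal),
      H.sat (AExec.FEC Fseq) ∧ ¬ H.sat (AExec.BEC Fseq) := by
  refine ⟨Fin 4, myHistory, ⟨myExec, rfl, ?_, ?_, ?_, ?_⟩, ?_⟩
  · -- EV
    intro e; exact Set.toFinite _
  · -- NCC
    have key : ∀ a b : Fin 4,
        Relation.TransGen (fun a b => myExec.so a b ∨ myExec.vis a b) a b → myVis a b := by
      intro a b h
      induction h with
      | single h => rcases h with ⟨h, -⟩ | h; exact h.elim; exact h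
      | tail _ hbc ih =>
        rcases hbc with ⟨h, -⟩ | h
        · exact h.elim
        · exact absurd (le_trans ih.2 h.1) (by norm_num)
    intro e h
    exact absurd (le_trans (key e e h).2 (key e e h).1) (by norm_num)
  · -- FRVal
    intro e
    fin_cases e
    · rfl
    · rfl
    · -- read event 2 : sees la before lb
      have h2 : ((2 : Fin 4)).val = 2 := rfl
      let u : (myExec.fcontext 2).carrier := ⟨0, by constructor <;> decide⟩
      let v : (myExec.fcontext 2).carrier := ⟨1, by constructor <;> decide⟩
      have huv : u ≠ v := by
        intro h
        exact absurd (congrArg Subtype.val h) (by decide)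
      have har : (myExec.fcontext 2).ar u v := by
        show myPar 2 0 1
        unfold myPar
        rw [if_neg (by decide)]
        decide
      have hall : ∀ x : (myExec.fcontext 2).carrier, x = u ∨ x = v := by
        rintro ⟨x, hx⟩
        have h1 : x.val ≤ 1 := hx.1
        fin_cases x
        · exact Or.inl rfl
        · exact Or.inr rfl
        · exact absurd h1 (by norm_num)
        · exact absurd h1 (by norm_num)
      have hpair := (myExec.fcontext 2).sortedEvents_pair u v huv har hall
      have hw : seqReadWord (myExec.fcontext 2) = [la, lb] := by
        rw [seqReadWord, hpair]; rfl
      show myRval 2 = some (Fseq (myOp 2) (myExec.fcontext 2))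
      rw [show Fseq (myOp 2) (myExec.fcontext 2)
            = SeqVal.word (seqReadWord (myExec.fcontext 2)) from rfl, hw]
      rfl
    · -- read event 3 : sees lb before la
      let u : (myExec.fcontext 3).carrier := ⟨1, by constructor <;> decide⟩
      let v : (myExec.fcontext 3).carrier := ⟨0, by constructor <;> decide⟩
      have huv : u ≠ v := by
        intro h
        exact absurd (congrArg Subtype.val h) (by decide)
      have har : (myExec.fcontext 3).ar u v := by
        show myPar 3 1 0
        unfold myPar
        rw [if_pos (by decide)]
        decide
      have hall : ∀ x : (myExec.fcontext 3).carrier, x = u ∨ x = v := by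
        rintro ⟨x, hx⟩
        have h1 : x.val ≤ 1 := hx.1
        fin_cases x
        · exact Or.inr rfl
        · exact Or.inl rfl
        · exact absurd h1 (by norm_num)
        · exact absurd h1 (by norm_num)
      have hpair := (myExec.fcontext 3).sortedEvents_pair u v huv har hall
      have hw : seqReadWord (myExec.fcontext 3) = [lb, la] := by
        rw [seqReadWord, hpair]; rfl
      show myRval 3 = some (Fseq (myOp 3) (myExec.fcontext 3))
      rw [show Fseq (myOp 3) (myExec.fcontext 3)
            = SeqVal.word (seqReadWord (myExec.fcontext 3)) from rfl, hw]
      rfl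
  · -- CPar
    intro e; exact Set.toFinite _
  · -- not BEC
    rintro ⟨A, hA, hEV, hNCC, hRVal⟩
    have hop : A.op = myOp := congrArg History.op hA
    have hrv : A.rval = myRval := congrArg History.rval hA
    have h2 := hRVal 2
    have h3 := hRVal 3
    rw [hrv, hop] at h2 h3
    have hw2 : seqReadWord (A.context 2) = [la, lb] := by
      have : myRval 2 = some (SeqVal.word [la, lb]) := rfl
      rw [this, show myOp 2 = SeqOp.read from rfl] at h2
      have := Option.some.inj h2
      rw [show Fseq SeqOp.read (A.context 2)
            = SeqVal.word (seqReadWord (A.context 2)) from rfl] at this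
      exact (SeqVal.word.inj this).symm ▸ rfl
    have hw3 : seqReadWord (A.context 3) = [lb, la] := by
      have : myRval 3 = some (SeqVal.word [lb, la]) := rfl
      rw [this, show myOp 3 = SeqOp.read from rfl] at h3
      have := Option.some.inj h3
      rw [show Fseq SeqOp.read (A.context 3)
            = SeqVal.word (seqReadWord (A.context 3)) from rfl] at this
      exact (SeqVal.word.inj this).symm ▸ rfl
    have har1 : A.ar 0 1 :=
      read_forces_ar A hop 2 la lb 0 1 opWord_la opWord_lb (by decide) hw2
    have har2 : A.ar 1 0 :=
      read_forces_ar A hop 3 lb la 1 0 opWord_lb opWord_la (by decide) hw3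
    exact A.ar_irrefl 0 (A.ar_trans 0 1 0 har1 har2)


/-- There is a history over the operations of the append-only
sequence data type `F_seq` that satisfies `FEC(F_seq)` but not `BEC(F_seq)`;
hence `FEC(F_seq)` is strictly weaker than `BEC(F_seq)`. -/
theorem fec_strictly_weaker_than_bec :
    ∃ (E : Type) (H : History E SeqOp SeqVal),
      H.sat (AExec.FEC Fseq) ∧ ¬ H.sat (AExec.BEC Fseq) := by
  exact fec_aux
end

section
/- For every replicated data type F, every level l ∈ {weak, strong} and every history H, if H satisfies the parametrized guarantee BEC(l, F) then H satisfies the parametrized guarantee FEC(l, F). -/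
set_option autoImplicit false

/-- For every replicated data type `F`, every level `l` and
every history `H`, if `H` satisfies `BEC(l, F)` then `H` satisfies
`FEC(l, F)`. -/
theorem fecl_le_becl {E Op Val : Type} (F : RDT Op Val) (l : Lvl)
    (H : History E Op Val) (h : H.sat (fun A => A.BECL F.F l)) :
    H.sat (fun A => A.FECL F.F l) := by
  obtain ⟨A, hA, hEV, hNCC, hRV⟩ := h
  refine ⟨{ A with
            par := fun _ => A.ar
            par_irrefl := fun _ => A.ar_irrefl
            par_trans := fun _ => A.ar_trans
            par_total := fun _ => A.ar_total }, hA, hEV, hNCC, hRV, ?_⟩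
  intro e
  convert Set.finite_empty
  ext e'
  simp
end

section
/- There exist a level l ∈ {weak, strong} and a history H over the operations of the append-only sequence data type F_seq such that H satisfies FEC(l, F_seq) but does not satisfy BEC(l, F_seq); hence the parametrized guarantee FEC(l, F) is strictly weaker than BEC(l, F). -/
set_option autoImplicit false

section Aux

/-- The word contributed by an operation. -/
def wordOf : SeqOp → Word
  | SeqOp.append s => s
  | SeqOp.read => []

section SortHelper
variable {Op : Type} (C : OpContext Op)

private lemma sortPrep :
    (∀ x : C.carrier, x ∈ C.sortedEvents) ∧ C.sortedEvents.Nodup ∧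
      C.sortedEvents.Pairwise (fun a b => a = b ∨ C.ar a b) := by
  haveI := C.finite
  letI : Fintype C.carrier := Fintype.ofFinite _
  letI : DecidableRel (fun a b : C.carrier => a = b ∨ C.ar a b) := Classical.decRel _
  haveI : IsTrans C.carrier (fun a b => a = b ∨ C.ar a b) := ⟨by
    rintro a b c (rfl | hab) (rfl | hbc)
    · exact Or.inl rfl
    · exact Or.inr hbc
    · exact Or.inr hab
    · exact Or.inr (C.ar_trans _ _ _ hab hbc)⟩
  haveI : IsAntisymm C.carrier (fun a b => a = b ∨ C.ar a b) := ⟨by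
    rintro a b (rfl | hab) (h | hba)
    · rfl
    · rfl
    · exact h.symm
    · exact absurd (C.ar_trans _ _ _ hab hba) (C.ar_irrefl a)⟩
  haveI : IsTotal C.carrier (fun a b => a = b ∨ C.ar a b) := ⟨by
    intro a b
    by_cases h : a = b
    · exact Or.inl (Or.inl h)
    · rcases C.ar_total a b h with h' | h'
      · exact Or.inl (Or.inr h')
      · exact Or.inr (Or.inr h')⟩
  unfold OpContext.sortedEvents
  exact ⟨fun x => (Finset.mem_sort _).mpr (Finset.mem_univ x),
    Finset.sort_nodup _ _, Finset.pairwise_sort _ _⟩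

end SortHelper

lemma sortedEvents_mem {Op : Type} (C : OpContext Op) (x : C.carrier) :
    x ∈ C.sortedEvents := (sortPrep C).1 x

lemma sortedEvents_sorted {Op : Type} (C : OpContext Op) :
    C.sortedEvents.Pairwise (fun a b => a = b ∨ C.ar a b) := (sortPrep C).2.2

lemma sortedEvents_nodup {Op : Type} (C : OpContext Op) :
    C.sortedEvents.Nodup := (sortPrep C).2.1

lemma seqReadWord_eq (C : OpContext SeqOp) :
    seqReadWord C = ((C.sortedEvents).map (fun e => wordOf (C.op e))).flatten := by
  unfold seqReadWord
  generalize C.sortedEvents = l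
  induction l with
  | nil => rfl
  | cons a t ih =>
    cases h : C.op a <;> simp [h, wordOf, ih]

lemma sortedEvents_pair {Op : Type} (C : OpContext Op) (x y : C.carrier) (hxy : x ≠ y)
    (hall : ∀ z, z = x ∨ z = y) (har : C.ar x y) : C.sortedEvents = [x, y] := by
  have hmem : ∀ z : C.carrier, z ∈ C.sortedEvents := sortedEvents_mem C
  have hnd := sortedEvents_nodup C
  have hs := sortedEvents_sorted C
  rcases hl : C.sortedEvents with _ | ⟨a, t⟩
  · exact absurd (hmem x) (by simp [hl])
  rw [hl] at hmem hnd hs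
  rcases hall a with rfl | rfl
  · -- head is x
    rcases ht : t with _ | ⟨b, t'⟩
    · have := hmem y; simp [ht] at this; exact absurd this.symm hxy
    rw [ht] at hmem hnd hs
    rcases hall b with rfl | rfl
    · simp at hnd
    · -- tail t' must be empty
      rcases ht' : t' with _ | ⟨c, _⟩
      · rfl
      · rw [ht'] at hmem hnd
        rcases hall c with rfl | rfl <;> simp at hnd
  · -- head is y, impossible
    have hx : x ∈ t := by
      have := hmem x
      simp at this
      rcases this with h | h
      · exact absurd h hxy
      · exact h
    have := (List.pairwise_cons.mp hs).1 x hx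
    rcases this with h | h
    · exact absurd h.symm hxy
    · exact absurd (C.ar_trans _ _ _ har h) (C.ar_irrefl x)

lemma flatten_two {α : Type} (c d : Letter) (hcd : c ≠ d) (w : α → Word) :
    ∀ l : List α, (∀ a ∈ l, w a = [] ∨ w a = [c] ∨ w a = [d]) →
    (l.map w).flatten = [c, d] →
    ∃ x y, List.Sublist [x, y] l ∧ w x = [c] ∧ w y = [d] := by
  intro l
  induction l with
  | nil => intro _ h; simp at h
  | cons a t ih =>
    intro hw hj
    simp only [List.map_cons, List.flatten_cons] at hj
    rcases hw a (by simp) with h | h | h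
    · rw [h, List.nil_append] at hj
      obtain ⟨x, y, hsub, hx, hy⟩ := ih (fun b hb => hw b (by simp [hb])) hj
      exact ⟨x, y, hsub.cons a, hx, hy⟩
    · rw [h] at hj
      simp only [List.cons_append, List.nil_append, List.cons.injEq] at hj
      -- hj : c = c ∧ (t.map w).flatten = [d]
      have hd : d ∈ (t.map w).flatten := by rw [hj.2]; simp
      rw [List.mem_flatten] at hd
      obtain ⟨u, hu, hdu⟩ := hd
      rw [List.mem_map] at hu
      obtain ⟨y, hyt, rfl⟩ := hu
      have hwy : w y = [d] := by
        rcases hw y (by simp [hyt]) with h' | h' | h'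
        · rw [h'] at hdu; simp at hdu
        · rw [h'] at hdu; simp at hdu; exact absurd hdu.symm hcd
        · exact h'
      exact ⟨a, y, List.cons_sublist_cons.mpr (List.singleton_sublist.mpr hyt), h, hwy⟩
    · rw [h] at hj
      simp only [List.cons_append, List.cons.injEq] at hj
      exact absurd hj.1.symm hcd

end Aux

section Example5

def exOp : Fin 4 → SeqOp := fun k =>
  if k = 0 then SeqOp.append [(0 : Letter)]
  else if k = 1 then SeqOp.append [(1 : Letter)]
  else SeqOp.read

def exRval : Fin 4 → Option SeqVal := fun k =>
  if k = 0 then some SeqVal.ok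
  else if k = 1 then some SeqVal.ok
  else if k = 2 then some (SeqVal.word [(0 : Letter), (1 : Letter)])
  else some (SeqVal.word [(1 : Letter), (0 : Letter)])

def exH : History (Fin 4) SeqOp SeqVal where
  op := exOp
  rval := exRval
  rb := fun _ _ => False
  ss := Eq
  lvl := fun _ => Lvl.weak
  countable := inferInstance
  rb_irrefl := fun _ h => h
  rb_trans := fun _ _ _ h => h.elim
  rb_finite_preds := fun _ => Set.toFinite _
  rb_ret := fun _ _ h => h.elim
  rb_interval := fun _ _ _ _ h => h.elim
  ss_equiv := eq_equivalence
  ss_rb_total := fun _ _ h hne => absurd h hne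

def exVis : Fin 4 → Fin 4 → Prop := fun x y => (x = 0 ∨ x = 1) ∧ (y = 2 ∨ y = 3)

def gsw : Fin 4 → Fin 4 := ![1, 0, 2, 3]

lemma exVis_bound : ∀ x y : Fin 4, Relation.TransGen exVis x y → exVis x y := by
  intro x y h
  induction h with
  | single h => exact h
  | tail _ h2 ih => exact ⟨ih.1, h2.2⟩

noncomputable def exA : AExec (Fin 4) SeqOp SeqVal where
  toHistory := exH
  vis := exVis
  ar := fun a b => a < b
  par := fun e a b => if e = 3 then gsw a < gsw b else a < b
  vis_acyclic := by
    intro e h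
    obtain ⟨h1, h2⟩ := exVis_bound e e h
    rcases h1 with rfl | rfl <;> rcases h2 with h2 | h2 <;> exact absurd h2 (by decide)
  vis_finite_preds := fun _ => Set.toFinite _
  ar_irrefl := fun a => lt_irrefl a
  ar_trans := fun _ _ _ h1 h2 => lt_trans h1 h2
  ar_total := fun _ _ h => h.lt_or_gt
  par_irrefl := by
    intro e a
    by_cases hh : e = 3
    · simp only [if_pos hh]; exact lt_irrefl _
    · simp only [if_neg hh]; exact lt_irrefl _
  par_trans := by
    intro e a b c h1 h2
    by_cases hh : e = 3
    · simp only [if_pos hh] at h1 h2 ⊢; exact lt_trans h1 h2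
    · simp only [if_neg hh] at h1 h2 ⊢; exact lt_trans h1 h2
  par_total := by
    intro e a b hab
    have hg : gsw a ≠ gsw b := by revert hab; revert a b; decide
    by_cases hh : e = 3
    · simp only [if_pos hh]; exact hg.lt_or_gt
    · simp only [if_neg hh]; exact hab.lt_or_gt

lemma exA_hist : exA.toHistory = exH := rfl

lemma exA_ncc : exA.NCCL Lvl.weak := by
  intro e h
  have h1 : Relation.TransGen exA.hb e e :=
    Relation.TransGen.mono (p := exA.hb) (fun a b hab => hab.1) e e h
  have h2 : exA.hb e e := by
    have e1 : Relation.TransGen exA.hb = exA.hb := Relation.transGen_idem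
    rw [← e1]
    exact h1
  have h3 : Relation.TransGen exVis e e := by
    refine Relation.TransGen.mono ?_ e e h2
    rintro a b (hso | hv)
    · exact hso.1.elim
    · exact hv
  exact exA.vis_acyclic e h3

lemma pair_word (e : Fin 4) (i j : Fin 4)
    (pi : exA.vis i e) (pj : exA.vis j e) (hij : i ≠ j)
    (hall : ∀ z : {x : Fin 4 // exA.vis x e}, z = ⟨i, pi⟩ ∨ z = ⟨j, pj⟩)
    (har : exA.par e i j) :
    seqReadWord (exA.fcontext e) = wordOf (exOp i) ++ wordOf (exOp j) := by
  have hpair : (exA.fcontext e).sortedEvents = [⟨i, pi⟩, ⟨j, pj⟩] := by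
    refine sortedEvents_pair _ _ _ ?_ hall har
    intro hh
    exact hij (congrArg Subtype.val hh)
  rw [seqReadWord_eq, hpair]
  show wordOf (exOp i) ++ (wordOf (exOp j) ++ []) = _
  rw [List.append_nil]

lemma exA_frval : exA.FRValL Fseq Lvl.weak := by
  have hv02 : exVis 0 2 := ⟨Or.inl rfl, Or.inl rfl⟩
  have hv12 : exVis 1 2 := ⟨Or.inr rfl, Or.inl rfl⟩
  have hv03 : exVis 0 3 := ⟨Or.inl rfl, Or.inr rfl⟩
  have hv13 : exVis 1 3 := ⟨Or.inr rfl, Or.inr rfl⟩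
  intro e _
  fin_cases e
  · rfl
  · rfl
  · have h2 : seqReadWord (exA.fcontext 2) = [(0 : Letter), (1 : Letter)] := by
      have := pair_word 2 0 1 hv02 hv12 (by decide)
        (by
          rintro ⟨k, hk⟩
          rcases hk.1 with rfl | rfl
          · exact Or.inl rfl
          · exact Or.inr rfl)
        (by show (if (2 : Fin 4) = 3 then gsw 0 < gsw 1 else (0 : Fin 4) < 1); decide)
      rw [this]; rfl
    show some (SeqVal.word [(0 : Letter), (1 : Letter)])
      = some (SeqVal.word (seqReadWord (exA.fcontext 2)))
    rw [h2]
  · have h3 : seqReadWord (exA.fcontext 3) = [(1 : Letter), (0 : Letter)] := by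
      have := pair_word 3 1 0 hv13 hv03 (by decide)
        (by
          rintro ⟨k, hk⟩
          rcases hk.1 with rfl | rfl
          · exact Or.inr rfl
          · exact Or.inl rfl)
        (by show (if (3 : Fin 4) = 3 then gsw 1 < gsw 0 else (1 : Fin 4) < 0); decide)
      rw [this]; rfl
    show some (SeqVal.word [(1 : Letter), (0 : Letter)])
      = some (SeqVal.word (seqReadWord (exA.fcontext 3)))
    rw [h3]

lemma read_ar (A : AExec (Fin 4) SeqOp SeqVal) (hop : A.op = exOp)
    (e i j : Fin 4) (c d : Letter) (hcd : c ≠ d)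
    (hi : ∀ k : Fin 4, wordOf (exOp k) = [c] → k = i)
    (hj : ∀ k : Fin 4, wordOf (exOp k) = [d] → k = j)
    (hall : ∀ k : Fin 4, wordOf (exOp k) = [] ∨ wordOf (exOp k) = [c] ∨ wordOf (exOp k) = [d])
    (h : seqReadWord (A.context e) = [c, d]) :
    A.ar i j := by
  rw [seqReadWord_eq] at h
  have hop' : ∀ z : (A.context e).carrier, (A.context e).op z = exOp z.1 := by
    intro z
    show A.op z.1 = exOp z.1
    rw [hop]
  obtain ⟨x, y, hsub, hx, hy⟩ :=
    flatten_two c d hcd (fun z => wordOf ((A.context e).op z)) _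
      (fun a _ => by rw [hop' a]; exact hall a.1) h
  rw [hop'] at hx hy
  have hx1 : x.1 = i := hi _ hx
  have hy1 : y.1 = j := hj _ hy
  have hxy : x ≠ y := by
    intro hh
    rw [hh, hy] at hx
    injection hx with h1 _
    exact hcd h1.symm
  have hp := List.Pairwise.sublist hsub (sortedEvents_sorted (A.context e))
  have hle := (List.pairwise_cons.mp hp).1 y (by simp)
  rcases hle with h' | h'
  · exact absurd h' hxy
  · have h'' : A.ar x.1 y.1 := h'
    rw [hx1, hy1] at h''
    exact h''

end Example5

/-- There exist a level `l` and a history over the operations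
of the append-only sequence data type `F_seq` that satisfies `FEC(l, F_seq)`
but not `BEC(l, F_seq)`; hence `FEC(l, F)` is strictly weaker than
`BEC(l, F)`. -/
theorem fecl_strictly_weaker_than_becl :
    ∃ (l : Lvl) (E : Type) (H : History E SeqOp SeqVal),
      H.sat (fun A => A.FECL Fseq l) ∧ ¬ H.sat (fun A => A.BECL Fseq l) := by
  refine ⟨Lvl.weak, Fin 4, exH, ⟨exA, exA_hist, fun _ => Set.toFinite _, exA_ncc,
    exA_frval, fun _ => Set.toFinite _⟩, ?_⟩
  rintro ⟨A, hA, _, _, hRVal⟩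
  have hop : A.op = exOp := congrArg History.op hA
  have hrv : A.rval = exRval := congrArg History.rval hA
  have hlv : A.lvl = exH.lvl := congrArg History.lvl hA
  have h2 := hRVal 2 (by rw [hlv]; rfl)
  have h3 := hRVal 3 (by rw [hlv]; rfl)
  rw [hrv, hop] at h2 h3
  have h2' : seqReadWord (A.context 2) = [(0 : Letter), (1 : Letter)] := by
    have hh : some (SeqVal.word [(0 : Letter), (1 : Letter)])
        = some (SeqVal.word (seqReadWord (A.context 2))) := h2
    injection hh with hh
    injection hh with hh
    exact hh.symm
  have h3' : seqReadWord (A.context 3) = [(1 : Letter), (0 : Letter)] := by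
    have hh : some (SeqVal.word [(1 : Letter), (0 : Letter)])
        = some (SeqVal.word (seqReadWord (A.context 3))) := h3
    injection hh with hh
    injection hh with hh
    exact hh.symm
  have har1 : A.ar 0 1 :=
    read_ar A hop 2 0 1 0 1 (by decide) (by decide) (by decide) (by decide) h2'
  have har2 : A.ar 1 0 :=
    read_ar A hop 3 1 0 1 0 (by decide) (by decide) (by decide) (by decide) h3'
  exact A.ar_irrefl 0 (A.ar_trans 0 1 0 har1 har2)
end

section
/- The parametrized guarantees Seq(l, F) and Lin(l, F) are incomparable, first direction: there exist a replicated data type F, a level l ∈ {weak, strong} and a history H such that H satisfies Seq(l, F) but does not satisfy Lin(l, F). -/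
set_option autoImplicit false

/-! ### Proof of Statement 14 -/

private lemma transGen_lt {α : Type} (g : α → ℕ) (r : α → α → Prop)
    (h : ∀ a b, r a b → g a < g b) :
    ∀ a b, Relation.TransGen r a b → g a < g b := by
  intro a b hab
  induction hab with
  | single h' => exact h _ _ h'
  | tail _ h' ih => exact ih.trans (h _ _ h')

/-- The counterexample history on two events. -/
private noncomputable def Hce : History (Fin 2) Unit ℕ where
  op := fun _ => ()
  rval := fun e => if e = 0 then some 1 else some 0
  rb := fun a b => a = 0 ∧ b = 1
  ss := Eq
  lvl := fun _ => Lvl.strong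
  countable := inferInstance
  rb_irrefl := by rintro a ⟨rfl, h⟩; exact absurd h (by decide)
  rb_trans := by rintro a b c ⟨rfl, rfl⟩ ⟨h, _⟩; exact absurd h (by decide)
  rb_finite_preds := fun e => Set.toFinite _
  rb_ret := by rintro a b ⟨rfl, rfl⟩; simp
  rb_interval := by rintro a b c d ⟨rfl, rfl⟩ ⟨rfl, rfl⟩; exact Or.inl ⟨rfl, rfl⟩
  ss_equiv := eq_equivalence
  ss_rb_total := by rintro a b rfl h; exact absurd rfl h

/-- The witnessing abstract execution for `Seq`. -/
private noncomputable def Ace : AExec (Fin 2) Unit ℕ where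
  toHistory := Hce
  vis := fun a b => a = 1 ∧ b = 0
  ar := fun a b => a = 1 ∧ b = 0
  par := fun _ a b => a = 1 ∧ b = 0
  vis_acyclic := by
    intro e he
    exact absurd (transGen_lt (fun x => if x = 1 then 0 else 1) _
      (by rintro a b ⟨rfl, rfl⟩; decide) e e he) (lt_irrefl _)
  vis_finite_preds := fun e => Set.toFinite _
  ar_irrefl := by rintro a ⟨rfl, h⟩; exact absurd h (by decide)
  ar_trans := by rintro a b c ⟨rfl, rfl⟩ ⟨h, _⟩; exact absurd h (by decide)
  ar_total := by decide
  par_irrefl := by rintro e a ⟨rfl, h⟩; exact absurd h (by decide)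
  par_trans := by rintro e a b c ⟨rfl, rfl⟩ ⟨h, _⟩; exact absurd h (by decide)
  par_total := by
    intro e
    show ∀ a b : Fin 2, a ≠ b → (a = 1 ∧ b = 0) ∨ (b = 1 ∧ a = 0)
    decide

/-- The counting replicated data type. -/
private noncomputable def Fcard : RDT Unit ℕ where
  F := fun _ C => Nat.card C.carrier
  iso_inv := by
    rintro o C C' ⟨i⟩
    exact Nat.card_congr i.toEquiv

/-- `Seq(l, F)` and `Lin(l, F)` are incomparable, first
direction: some history satisfies `Seq(l, F)` but not `Lin(l, F)`. -/
theorem seq_not_implies_lin :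
    ∃ (Op Val : Type) (F : RDT Op Val) (l : Lvl) (E : Type)
      (H : History E Op Val),
      H.sat (fun A => A.SeqL F.F l) ∧ ¬ H.sat (fun A => A.LinL F.F l) := by
  refine ⟨Unit, ℕ, Fcard, Lvl.strong, Fin 2, Hce, ⟨Ace, rfl, ?_, ?_, ?_, ?_, ?_⟩, ?_⟩
  · -- SinOrdL
    refine ⟨∅, by simp, ?_⟩
    intro x y _
    simp [Ace]
  · -- SessArbL
    rintro x y ⟨⟨rfl, rfl⟩, hss⟩ _
    have h01 : (0 : Fin 2) = 1 := hss
    exact absurd h01 (by decide)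
  · -- EVL
    intro e; exact Set.toFinite _
  · -- NCCL
    intro e he
    have hsub : ∀ a b : Fin 2, (Ace.so a b ∨ Ace.vis a b) →
        (if a = 1 then 0 else 1) < (if b = 1 then (0 : ℕ) else 1) := by
      rintro a b (⟨⟨rfl, rfl⟩, hss⟩ | ⟨rfl, rfl⟩)
      · have h01 : (0 : Fin 2) = 1 := hss
        exact absurd h01 (by decide)
      · decide
    have hhb : ∀ a b : Fin 2, Ace.hb a b →
        (if a = 1 then 0 else 1) < (if b = 1 then (0 : ℕ) else 1) :=
      fun a b h => transGen_lt (fun x => if x = 1 then 0 else 1) _ hsub a b h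
    exact absurd (transGen_lt (fun x => if x = 1 then 0 else 1)
      (fun a b => Ace.hb a b ∧ Ace.lvl a = Lvl.strong ∧ Ace.lvl b = Lvl.strong)
      (fun a b h => hhb a b h.1) e e he) (lt_irrefl _)
  · -- RValL
    intro e _
    have h0 : Nat.card {x : Fin 2 // Ace.vis x 0} = 1 := by
      refine Nat.card_eq_one_iff_unique.mpr ⟨⟨?_⟩, ⟨⟨1, by exact ⟨rfl, rfl⟩⟩⟩⟩
      rintro ⟨a, ha⟩ ⟨b, hb⟩
      exact Subtype.ext (ha.1.trans hb.1.symm)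
    have h1 : Nat.card {x : Fin 2 // Ace.vis x 1} = 0 := by
      have : IsEmpty {x : Fin 2 // Ace.vis x 1} := by
        refine ⟨?_⟩
        rintro ⟨a, -, h⟩
        exact absurd h (by decide)
      exact Nat.card_of_isEmpty
    fin_cases e
    · show Hce.rval 0 = some (Nat.card {x : Fin 2 // Ace.vis x 0})
      rw [h0]; rfl
    · show Hce.rval 1 = some (Nat.card {x : Fin 2 // Ace.vis x 1})
      rw [h1]; rfl
  · -- ¬ Lin
    rintro ⟨A, hA, ⟨E', hE', hvis⟩, hRT, -, -, hRVal⟩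
    have hrb : A.rb = Hce.rb := congrArg History.rb hA
    have hrval : A.rval = Hce.rval := congrArg History.rval hA
    have hlvl : A.lvl = Hce.lvl := congrArg History.lvl hA
    have har : A.ar 0 1 := hRT 0 1 (by rw [hlvl]; rfl) (by rw [hlvl]; rfl)
      (by rw [hrb]; exact ⟨rfl, rfl⟩)
    have h0E' : (0 : Fin 2) ∉ E' := by
      intro h
      have := hE' 0 h
      rw [hrval] at this
      simp [Hce] at this
    have hv : A.vis 0 1 := (hvis 0 1 (by rw [hlvl]; rfl)).mpr ⟨har, h0E'⟩
    have hcard := hRVal 1 (by rw [hlvl]; rfl)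
    rw [hrval] at hcard
    have : Hce.rval 1 = some 0 := rfl
    rw [this] at hcard
    have hc0 : Nat.card {x : Fin 2 // A.vis x 1} = 0 :=
      (Option.some.inj hcard).symm
    haveI : Finite {x : Fin 2 // A.vis x 1} := Subtype.finite
    have : Nonempty {x : Fin 2 // A.vis x 1} := ⟨⟨0, hv⟩⟩
    exact absurd hc0 (Nat.card_pos).ne'
end

section
/- The parametrized guarantees Seq(l, F) and Lin(l, F) are incomparable, second direction: there exist a replicated data type F, a level l ∈ {weak, strong} and a history H such that H satisfies Lin(l, F) but does not satisfy Seq(l, F). -/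
set_option autoImplicit false

/-- Auxiliary RDT: every operation returns whether the context is nonempty. -/
noncomputable def neRDT : RDT Unit Bool where
  F := fun _ C => @decide (Nonempty C.carrier) (Classical.propDecidable _)
  iso_inv := by
    rintro o C C' ⟨iso⟩
    exact decide_eq_decide.mpr
      ⟨fun ⟨x⟩ => ⟨iso.toEquiv x⟩, fun ⟨x⟩ => ⟨iso.toEquiv.symm x⟩⟩

/-- Auxiliary history: event `false` (weak) returns-before event `true`
(strong), same session. `rval true = some false` claims an empty context. -/
def cexHistory : History Bool Unit Bool where
  op := fun _ => ()
  rval := fun e => some (!e)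
  rb := fun a b => a = false ∧ b = true
  ss := fun _ _ => True
  lvl := fun e => if e then Lvl.strong else Lvl.weak
  countable := inferInstance
  rb_irrefl := by rintro a ⟨rfl, h⟩; exact Bool.noConfusion h
  rb_trans := by rintro a b c ⟨rfl, rfl⟩ ⟨h, _⟩; exact Bool.noConfusion h
  rb_finite_preds := fun e => Set.toFinite _
  rb_ret := by rintro a b ⟨rfl, rfl⟩; simp
  rb_interval := by rintro a b c d ⟨rfl, rfl⟩ ⟨rfl, rfl⟩; exact Or.inl ⟨rfl, rfl⟩
  ss_equiv := ⟨fun _ => trivial, fun _ => trivial, fun _ _ => trivial⟩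
  ss_rb_total := by
    rintro a b - h
    match a, b with
    | false, true => exact Or.inl ⟨rfl, rfl⟩
    | true, false => exact Or.inr ⟨rfl, rfl⟩
    | false, false => exact absurd rfl h
    | true, true => exact absurd rfl h

/-- The witnessing abstract execution for `Lin`. -/
def linAExec : AExec Bool Unit Bool where
  toHistory := cexHistory
  vis := fun _ _ => False
  ar := fun a b => a = true ∧ b = false
  par := fun _ a b => a = true ∧ b = false
  vis_acyclic := fun e h => by
    cases h with
    | single h => exact h
    | tail _ h => exact h
  vis_finite_preds := fun e => Set.toFinite _
  ar_irrefl := by rintro a ⟨rfl, h⟩; exact Bool.noConfusion h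
  ar_trans := by rintro a b c ⟨rfl, rfl⟩ ⟨h, -⟩; exact Bool.noConfusion h
  ar_total := by
    rintro a b h
    match a, b with
    | true, false => exact Or.inl ⟨rfl, rfl⟩
    | false, true => exact Or.inr ⟨rfl, rfl⟩
    | false, false => exact absurd rfl h
    | true, true => exact absurd rfl h
  par_irrefl := by rintro e a ⟨rfl, h⟩; exact Bool.noConfusion h
  par_trans := by rintro e a b c ⟨rfl, rfl⟩ ⟨h, -⟩; exact Bool.noConfusion h
  par_total := by
    rintro e a b h
    match a, b with
    | true, false => exact Or.inl ⟨rfl, rfl⟩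
    | false, true => exact Or.inr ⟨rfl, rfl⟩
    | false, false => exact absurd rfl h
    | true, true => exact absurd rfl h

lemma linAExec_no_hb_from_true (c : Bool) : ¬ linAExec.hb true c := by
  intro hc
  have step : ∀ x y : Bool, (linAExec.so x y ∨ linAExec.vis x y) → x = false := by
    rintro x y (⟨⟨rfl, -⟩, -⟩ | h)
    · rfl
    · exact h.elim
  obtain ⟨y, h, -⟩ := Relation.TransGen.head'_iff.mp hc
  exact Bool.noConfusion (step _ _ h)

/-- `Seq(l, F)` and `Lin(l, F)` are incomparable, second
direction: some history satisfies `Lin(l, F)` but not `Seq(l, F)`. -/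
theorem lin_not_implies_seq :
    ∃ (Op Val : Type) (F : RDT Op Val) (l : Lvl) (E : Type)
      (H : History E Op Val),
      H.sat (fun A => A.LinL F.F l) ∧ ¬ H.sat (fun A => A.SeqL F.F l) := by
  refine ⟨Unit, Bool, neRDT, Lvl.strong, Bool, cexHistory, ?_, ?_⟩
  · -- Lin holds
    refine ⟨linAExec, rfl, ?_, ?_, ?_, ?_, ?_⟩
    · -- SinOrdL
      refine ⟨∅, fun x hx => absurd hx (Set.notMem_empty x), ?_⟩
      intro x y hy
      have hy' : y = true := by
        simp only [linAExec, cexHistory] at hy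
        cases y <;> simp_all
      constructor
      · rintro ⟨⟩
      · rintro ⟨⟨rfl, h⟩, -⟩
        rw [hy'] at h
        exact Bool.noConfusion h
    · -- RTL
      rintro x y hx hy ⟨rfl, rfl⟩
      simp only [linAExec, cexHistory] at hx
      simp at hx
    · -- EVL
      exact fun e => Set.toFinite _
    · -- NCCL
      intro e h
      have key : ∀ a b : Bool,
          (linAExec.hb a b ∧ linAExec.lvl a = Lvl.strong ∧
            linAExec.lvl b = Lvl.strong) → False := by
        rintro a b ⟨hab, ha, -⟩
        have ha' : a = true := by
          simp only [linAExec, cexHistory] at ha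
          cases a <;> simp_all
        subst ha'
        exact linAExec_no_hb_from_true b hab
      cases h with
      | single h => exact key _ _ h
      | tail _ h => exact key _ _ h
    · -- RValL
      intro e he
      have he' : e = true := by
        simp only [linAExec, cexHistory] at he
        cases e <;> simp_all
      subst he'
      show some false = some _
      congr 1
      show (false : Bool) = @decide _ (Classical.propDecidable _)
      rw [eq_comm, decide_eq_false_iff_not]
      rintro ⟨⟨x, hx⟩⟩
      exact hx
  · -- Seq fails
    rintro ⟨A, hA, hSin, hSess, hEV, hNCC, hRVal⟩
    have hrb : A.rb = cexHistory.rb := congrArg History.rb hA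
    have hss : A.ss = cexHistory.ss := congrArg History.ss hA
    have hlvl : A.lvl = cexHistory.lvl := congrArg History.lvl hA
    have hrval : A.rval = cexHistory.rval := congrArg History.rval hA
    have hlt : A.lvl true = Lvl.strong := by rw [hlvl]; rfl
    have har : A.ar false true :=
      hSess false true ⟨by rw [hrb]; exact ⟨rfl, rfl⟩, by rw [hss]; trivial⟩ hlt
    obtain ⟨E', hE', hvis⟩ := hSin
    have hfn : (false : Bool) ∉ E' := by
      intro h
      have := hE' false h
      rw [hrval] at this
      simp [cexHistory] at this
    have hv : A.vis false true := (hvis false true hlt).mpr ⟨har, hfn⟩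
    have hthis := hRVal true hlt
    rw [hrval] at hthis
    have h2 : (false : Bool) = @decide (Nonempty {x : Bool // A.vis x true})
        (Classical.propDecidable _) := Option.some_injective _ hthis
    rw [eq_comm, decide_eq_false_iff_not] at h2
    exact h2 ⟨⟨false, hv⟩⟩
end

section
/- The implication 'SinOrd and SessArb imply NCC' fails in parametrized form: there exist a level l ∈ {weak, strong} and an abstract execution A that satisfies SinOrd(l) and SessArb(l) but does not satisfy NCC(l). -/
set_option autoImplicit false

/-- The implication "`SinOrd` and `SessArb` imply `NCC`"
fails in parametrized form: there are a level `l` and an abstract execution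
satisfying `SinOrd(l)` and `SessArb(l)` but not `NCC(l)`. -/
theorem sinordl_sessarbl_not_imp_nccl :
    ∃ (E Op Val : Type) (l : Lvl) (A : AExec E Op Val),
      A.SinOrdL l ∧ A.SessArbL l ∧ ¬ A.NCCL l := by
  refine ⟨Bool, Unit, Unit, Lvl.weak, ?_, ?_, ?_, ?_⟩
  · exact
    { op := fun _ => ()
      rval := fun _ => some ()
      rb := fun x y => x = false ∧ y = true
      ss := fun _ _ => True
      lvl := fun x => if x then Lvl.strong else Lvl.weak
      countable := inferInstance
      rb_irrefl := by rintro a ⟨rfl, h⟩; exact Bool.noConfusion h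
      rb_trans := by rintro a b c ⟨rfl, rfl⟩ ⟨h, _⟩; exact Bool.noConfusion h
      rb_finite_preds := fun e => Set.toFinite _
      rb_ret := by rintro a b _; simp
      rb_interval := by rintro a b c d ⟨rfl, rfl⟩ ⟨rfl, rfl⟩; exact Or.inl ⟨rfl, rfl⟩
      ss_equiv := ⟨fun _ => trivial, fun _ => trivial, fun _ _ => trivial⟩
      ss_rb_total := by
        rintro a b - h
        cases a <;> cases b <;> simp_all
      vis := fun x y => x = true ∧ y = false
      ar := fun x y => x = true ∧ y = false
      par := fun _ x y => x = true ∧ y = false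
      vis_acyclic := by
        intro e h
        have : ∀ a b : Bool, Relation.TransGen (fun x y => x = true ∧ y = false) a b →
            a = true ∧ b = false := by
          intro a b h
          induction h with
          | single h => exact h
          | tail _ h2 ih => exact ⟨ih.1, h2.2⟩
        have := this e e h
        rw [this.2] at this
        exact Bool.noConfusion this.1
      vis_finite_preds := fun e => Set.toFinite _
      ar_irrefl := by rintro a ⟨rfl, h⟩; exact Bool.noConfusion h
      ar_trans := by rintro a b c ⟨rfl, rfl⟩ ⟨h, _⟩; exact Bool.noConfusion h
      ar_total := by rintro a b h; cases a <;> cases b <;> simp_all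
      par_irrefl := by rintro e a ⟨rfl, h⟩; exact Bool.noConfusion h
      par_trans := by rintro e a b c ⟨rfl, rfl⟩ ⟨h, _⟩; exact Bool.noConfusion h
      par_total := by rintro e a b h; cases a <;> cases b <;> simp_all }
  · refine ⟨∅, fun x hx => absurd hx (Set.notMem_empty x), ?_⟩
    intro x y hy
    simp only [Set.mem_empty_iff_false, not_false_eq_true, and_true]
  · rintro x y ⟨⟨rfl, rfl⟩, -⟩ hl
    simp at hl
  · intro h
    apply h false
    apply Relation.TransGen.single
    refine ⟨?_, rfl, rfl⟩
    exact Relation.TransGen.head (Or.inl ⟨⟨rfl, rfl⟩, trivial⟩)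
      (Relation.TransGen.single (Or.inr ⟨rfl, rfl⟩))
end
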